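/- Let r > 1 be a real number, let M ≥ 1, and let a_1,…,a_M > 0 be positive reals. Then the minimum of Σ_{m=1}^M λ_m^r · a_m over all λ in the probability simplex equals ( Σ_{m=1}^M a_m^{1/(1−r)} )^{1−r}. (This is the optimal value attained by the weight-update rule of Eq. (23).) -/

import Mathlib

/-- optimal value of the weight-update rule of Eq. (23): for `r > 1`
and positive reals `a_1, …, a_M`, the minimum of `∑ m, λ_m^r a_m` over the
probability simplex equals `(∑ m, a_m^{1/(1−r)})^{1−r}`. -/
theorem weight_update_optimal_value {M : ℕ} (hM : 1 ≤ M) (r : ℝ) (hr : 1 < r)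
    (a : Fin M → ℝ) (ha : ∀ m, 0 < a m) :
    IsLeast
      {x : ℝ | ∃ lam : Fin M → ℝ, (∀ m, 0 ≤ lam m) ∧ (∑ m, lam m = 1) ∧
        x = ∑ m, lam m ^ r * a m}
      ((∑ m, a m ^ ((1 : ℝ) / (1 - r))) ^ (1 - r)) := by
  have hrne : (1 : ℝ) - r ≠ 0 := by linarith
  have hrpos : (0 : ℝ) < r := by linarith
  have hrm : r - 1 ≠ 0 := by linarith
  set S : ℝ := ∑ m, a m ^ ((1 : ℝ) / (1 - r)) with hS
  have hSpos : 0 < S := by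
    apply Finset.sum_pos
    · intro m _
      exact Real.rpow_pos_of_pos (ha m) _
    · have : (Finset.univ : Finset (Fin M)).Nonempty := by
        simpa [Finset.univ_nonempty_iff] using
          (Fin.pos_iff_nonempty.mp (by omega))
      exact this
  constructor
  · -- membership: the optimal lam
    refine ⟨fun m => a m ^ ((1 : ℝ) / (1 - r)) / S, ?_, ?_, ?_⟩
    · intro m
      exact div_nonneg (Real.rpow_nonneg (ha m).le _) hSpos.le
    · rw [← Finset.sum_div, ← hS, div_self hSpos.ne']
    · have key : ∀ m : Fin M,
          (a m ^ ((1 : ℝ) / (1 - r)) / S) ^ r * a m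
            = a m ^ ((1 : ℝ) / (1 - r)) / S ^ r := by
        intro m
        rw [Real.div_rpow (Real.rpow_nonneg (ha m).le _) hSpos.le,
          ← Real.rpow_mul (ha m).le, div_mul_eq_mul_div]
        nth_rewrite 2 [← Real.rpow_one (a m)]
        rw [← Real.rpow_add (ha m)]
        congr 2
        field_simp
        ring
      rw [Finset.sum_congr rfl (fun m _ => key m), ← Finset.sum_div, ← hS]
      rw [Real.rpow_sub hSpos, Real.rpow_one]
  · -- lower bound
    rintro x ⟨lam, hlam0, hlam1, rfl⟩
    set T : ℝ := ∑ m, lam m ^ r * a m with hT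
    have hTnn : 0 ≤ T := Finset.sum_nonneg fun m _ =>
      mul_nonneg (Real.rpow_nonneg (hlam0 m) _) (ha m).le
    have hq : r.HolderConjugate (r / (r - 1)) := by
      exact (Real.holderConjugate_iff_eq_conjExponent hr).mpr rfl
    have holder := Real.inner_le_Lp_mul_Lq_of_nonneg (Finset.univ)
      (f := fun m => lam m * a m ^ ((1 : ℝ) / r))
      (g := fun m => a m ^ (-(1 / r))) hq
      (fun m _ => mul_nonneg (hlam0 m) (Real.rpow_nonneg (ha m).le _))
      (fun m _ => Real.rpow_nonneg (ha m).le _)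
    have e1 : ∀ m : Fin M,
        lam m * a m ^ ((1 : ℝ) / r) * a m ^ (-(1 / r)) = lam m := by
      intro m
      rw [mul_assoc, ← Real.rpow_add (ha m)]
      simp
    have e2 : ∀ m : Fin M,
        (lam m * a m ^ ((1 : ℝ) / r)) ^ r = lam m ^ r * a m := by
      intro m
      rw [Real.mul_rpow (hlam0 m) (Real.rpow_nonneg (ha m).le _),
        ← Real.rpow_mul (ha m).le]
      rw [one_div, inv_mul_cancel₀ hrpos.ne', Real.rpow_one]
    have e3 : ∀ m : Fin M,
        (a m ^ (-(1 / r : ℝ))) ^ (r / (r - 1)) = a m ^ ((1 : ℝ) / (1 - r)) := by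
      intro m
      rw [← Real.rpow_mul (ha m).le]
      congr 1
      field_simp
      ring
    rw [Finset.sum_congr rfl (fun m _ => e1 m), hlam1,
      Finset.sum_congr rfl (fun m _ => e2 m),
      Finset.sum_congr rfl (fun m _ => e3 m), ← hT, ← hS] at holder
    -- holder : 1 ≤ T ^ (1/r) * S ^ (1/(r/(r-1)))
    have hstep : S ^ (-(1 / (r / (r - 1)))) ≤ T ^ ((1 : ℝ) / r) := by
      rw [Real.rpow_neg hSpos.le]
      rw [inv_le_iff_one_le_mul₀ (Real.rpow_pos_of_pos hSpos _)]
      linarith [holder]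
    have := Real.rpow_le_rpow (Real.rpow_nonneg hSpos.le _) hstep hrpos.le
    rw [← Real.rpow_mul hSpos.le, ← Real.rpow_mul hTnn] at this
    rw [one_div_mul_cancel hrpos.ne', Real.rpow_one] at this
    have hexp : -(1 / (r / (r - 1))) * r = 1 - r := by
      field_simp
      ring
    rw [hexp] at this
    exact this
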